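/- If X = (X_1,...,X_n) and Y = (Y_1,...,Y_n) are independent random vectors, then H(X,Y) = Σ_{i=1}^n H(X_i, Y_i | X_{<i}, Y_{>i}). -/

import Mathlib

open Finset Real
open scoped Classical

/-- The probability that the random variable `f` (on finite sample space `Ω` with
probability mass function `p`) takes the value `s`. -/
noncomputable def prob {Ω S : Type*} [Fintype Ω] (p : Ω → ℝ) (f : Ω → S) (s : S) : ℝ :=
  ∑ ω ∈ univ.filter (fun ω => f ω = s), p ω

/-- Shannon entropy (base 2) of the random variable `f`. -/
noncomputable def ent {Ω S : Type*} [Fintype Ω] [Fintype S] (p : Ω → ℝ) (f : Ω → S) : ℝ :=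
  ∑ s : S, prob p f s * logb 2 (1 / prob p f s)

section Aux
variable {Ω S T A B : Type*} [Fintype Ω]

lemma sum_prob [Fintype S] (p : Ω → ℝ) (f : Ω → S) : ∑ s : S, prob p f s = ∑ ω, p ω := by
  unfold prob
  simp only [Finset.sum_filter]
  rw [Finset.sum_comm]
  refine Finset.sum_congr rfl fun ω _ => ?_
  simp

lemma prob_comp [Fintype S] (p : Ω → ℝ) (f : Ω → S) (g : S → T) (t : T) :
    prob p (fun ω => g (f ω)) t = ∑ s : S, if g s = t then prob p f s else 0 := by
  unfold prob
  have step1 : ∀ s : S, (if g s = t then ∑ ω ∈ univ.filter (fun ω => f ω = s), p ω else 0)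
      = ∑ ω : Ω, if g s = t then (if f ω = s then p ω else 0) else 0 := by
    intro s
    by_cases h : g s = t
    · simp only [if_pos h, Finset.sum_filter]
    · simp [if_neg h]
  show ∑ ω ∈ univ.filter (fun ω => g (f ω) = t), p ω = _
  rw [Finset.sum_filter, Finset.sum_congr rfl (fun s (_ : s ∈ univ) => step1 s),
    Finset.sum_comm]
  refine Finset.sum_congr rfl fun ω _ => ?_
  rw [Finset.sum_eq_single (f ω)]
  · simp
  · intro s _ hs
    by_cases h : g s = t <;> simp [h, Ne.symm hs]
  · intro h; exact absurd (mem_univ _) h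

lemma ent_comp_inj [Fintype S] [Fintype T] (p : Ω → ℝ) (f : Ω → S) {g : S → T}
    (hg : Function.Injective g) :
    ent p (fun ω => g (f ω)) = ent p f := by
  unfold ent
  have h1 : ∀ s, prob p (fun ω => g (f ω)) (g s) = prob p f s := by
    intro s; unfold prob; congr 1; ext ω; simp [hg.eq_iff]
  have h2 : ∀ t, t ∉ univ.image g → prob p (fun ω => g (f ω)) t = 0 := by
    intro t ht
    unfold prob
    apply Finset.sum_eq_zero
    intro ω hω
    simp only [mem_filter, mem_univ, true_and] at hω
    exact absurd (Finset.mem_image.mpr ⟨f ω, mem_univ _, hω⟩) ht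
  calc ∑ t : T, prob p (fun ω => g (f ω)) t * logb 2 (1 / prob p (fun ω => g (f ω)) t)
      = ∑ t ∈ univ.image g, prob p (fun ω => g (f ω)) t * logb 2 (1 / prob p (fun ω => g (f ω)) t) := by
        refine (Finset.sum_subset (subset_univ _) ?_).symm
        intro t _ ht
        rw [h2 t ht, zero_mul]
    _ = ∑ s : S, prob p (fun ω => g (f ω)) (g s) * logb 2 (1 / prob p (fun ω => g (f ω)) (g s)) :=
        Finset.sum_image (fun a _ b _ h => hg h)
    _ = _ := by simp only [h1]

lemma ent_subsingleton [Fintype S] [Subsingleton S] (p : Ω → ℝ) (hp1 : ∑ ω, p ω = 1)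
    (f : Ω → S) : ent p f = 0 := by
  unfold ent
  refine Finset.sum_eq_zero fun s _ => ?_
  have : prob p f s = 1 := by
    unfold prob
    rw [Finset.filter_true_of_mem, hp1]
    intro ω _; exact Subsingleton.elim _ _
  rw [this]; simp

lemma ent_pair_of_indep [Fintype S] [Fintype T] (p : Ω → ℝ) (hp1 : ∑ ω, p ω = 1)
    (f : Ω → S) (g : Ω → T)
    (h : ∀ s t, prob p (fun ω => (f ω, g ω)) (s, t) = prob p f s * prob p g t) :
    ent p (fun ω => (f ω, g ω)) = ent p f + ent p g := by
  have hf1 : ∑ s : S, prob p f s = 1 := by rw [sum_prob, hp1]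
  have hg1 : ∑ t : T, prob p g t = 1 := by rw [sum_prob, hp1]
  unfold ent
  rw [Fintype.sum_prod_type]
  have key : ∀ s t, prob p (fun ω => (f ω, g ω)) (s, t) *
      logb 2 (1 / prob p (fun ω => (f ω, g ω)) (s, t)) =
      (prob p f s * logb 2 (1 / prob p f s)) * prob p g t
        + prob p f s * (prob p g t * logb 2 (1 / prob p g t)) := by
    intro s t
    rw [h]
    by_cases hs : prob p f s = 0
    · simp [hs]
    by_cases ht : prob p g t = 0
    · simp [ht]
    rw [one_div, one_div, one_div, mul_inv,
        Real.logb_mul (inv_ne_zero hs) (inv_ne_zero ht)]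
    ring
  calc ∑ s, ∑ t, prob p (fun ω => (f ω, g ω)) (s, t) *
        logb 2 (1 / prob p (fun ω => (f ω, g ω)) (s, t))
      = ∑ s, ∑ t, ((prob p f s * logb 2 (1 / prob p f s)) * prob p g t
          + prob p f s * (prob p g t * logb 2 (1 / prob p g t))) :=
        Finset.sum_congr rfl fun s _ => Finset.sum_congr rfl fun t _ => key s t
    _ = ∑ s, ((prob p f s * logb 2 (1 / prob p f s)) * (∑ t, prob p g t)
          + prob p f s * (∑ t, prob p g t * logb 2 (1 / prob p g t))) := by
        refine Finset.sum_congr rfl fun s _ => ?_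
        rw [Finset.sum_add_distrib, ← Finset.mul_sum, ← Finset.mul_sum]
    _ = _ := by
        rw [hg1]
        have h2 : ∑ s, prob p f s * (∑ t, prob p g t * logb 2 (1 / prob p g t))
            = ∑ t, prob p g t * logb 2 (1 / prob p g t) := by
          rw [← Finset.sum_mul, hf1, one_mul]
        simp only [mul_one]
        rw [Finset.sum_add_distrib, h2]

lemma prob_pair_comp [Fintype A] [Fintype B] (p : Ω → ℝ) (f : Ω → A) (g : Ω → B)
    (hind : ∀ a b, prob p (fun ω => (f ω, g ω)) (a, b) = prob p f a * prob p g b)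
    (u : A → S) (v : B → T) (s : S) (t : T) :
    prob p (fun ω => (u (f ω), v (g ω))) (s, t)
      = prob p (fun ω => u (f ω)) s * prob p (fun ω => v (g ω)) t := by
  have h1 := prob_comp p (fun ω => (f ω, g ω)) (fun ab => (u ab.1, v ab.2)) (s, t)
  simp only at h1
  rw [prob_comp p f u s, prob_comp p g v t, h1, Fintype.sum_prod_type,
    Finset.sum_mul_sum]
  refine Finset.sum_congr rfl fun a _ => Finset.sum_congr rfl fun b _ => ?_
  rw [hind a b]
  by_cases ha : u a = s <;> by_cases hb : v b = t <;>
    simp [ha, hb, Prod.ext_iff]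

lemma ent_pair_comp [Fintype A] [Fintype B] [Fintype S] [Fintype T]
    (p : Ω → ℝ) (hp1 : ∑ ω, p ω = 1) (f : Ω → A) (g : Ω → B)
    (hind : ∀ a b, prob p (fun ω => (f ω, g ω)) (a, b) = prob p f a * prob p g b)
    (u : A → S) (v : B → T) :
    ent p (fun ω => (u (f ω), v (g ω))) =
      ent p (fun ω => u (f ω)) + ent p (fun ω => v (g ω)) :=
  ent_pair_of_indep p hp1 _ _ (fun s t => prob_pair_comp p f g hind u v s t)

end Aux

/-- Conditional Shannon entropy `H(f | g) = H(f, g) - H(g)`. -/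
noncomputable def condEnt {Ω S T : Type*} [Fintype Ω] [Fintype S] [Fintype T]
    (p : Ω → ℝ) (f : Ω → S) (g : Ω → T) : ℝ :=
  ent p (fun ω => (f ω, g ω)) - ent p g

/-- If `X = (X_1,...,X_n)` and `Y = (Y_1,...,Y_n)` are independent random vectors, then
`H(X, Y) = Σ_{i=1}^n H(X_i, Y_i | X_{<i}, Y_{>i})`. -/
theorem entropy_eq_sum_cond_entropy {Ω 𝒳 𝒴 : Type*} [Fintype Ω] [Fintype 𝒳] [Fintype 𝒴]
    {n : ℕ} (p : Ω → ℝ) (hp0 : ∀ ω, 0 ≤ p ω) (hp1 : ∑ ω, p ω = 1)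
    (X : Ω → Fin n → 𝒳) (Y : Ω → Fin n → 𝒴)
    (hind : ∀ x y, prob p (fun ω => (X ω, Y ω)) (x, y) = prob p X x * prob p Y y) :
    ent p (fun ω => (X ω, Y ω)) =
      ∑ i : Fin n,
        condEnt p (fun ω => (X ω i, Y ω i))
          (fun ω => ((fun j : {j : Fin n // j < i} => X ω j.1),
                     (fun j : {j : Fin n // i < j} => Y ω j.1))) := by
  set F : ℕ → ℝ := fun k => ent p (fun ω => (fun j : {j : Fin n // (j : ℕ) < k} => X ω j.1))
    with hFdef
  set G : ℕ → ℝ := fun k => ent p (fun ω => (fun j : {j : Fin n // k ≤ (j : ℕ)} => Y ω j.1))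
    with hGdef
  have hterm : ∀ i : Fin n,
      condEnt p (fun ω => (X ω i, Y ω i))
        (fun ω => ((fun j : {j : Fin n // j < i} => X ω j.1),
                   (fun j : {j : Fin n // i < j} => Y ω j.1)))
      = (F ((i : ℕ) + 1) - F (i : ℕ)) + (G (i : ℕ) - G ((i : ℕ) + 1)) := by
    intro i
    -- the two "big" entropies
    -- step (a): joint entropy
    have hswap : ent p (fun ω => ((X ω i, Y ω i),
          ((fun j : {j : Fin n // j < i} => X ω j.1),
           (fun j : {j : Fin n // i < j} => Y ω j.1))))
        = ent p (fun ω => ((X ω i, (fun j : {j : Fin n // j < i} => X ω j.1)),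
           (Y ω i, (fun j : {j : Fin n // i < j} => Y ω j.1)))) := by
      exact ent_comp_inj p
        (f := fun ω => ((X ω i, (fun j : {j : Fin n // j < i} => X ω j.1)),
           (Y ω i, (fun j : {j : Fin n // i < j} => Y ω j.1))))
        (g := fun q => ((q.1.1, q.2.1), (q.1.2, q.2.2)))
        (by
          rintro ⟨⟨a, c⟩, ⟨b, d⟩⟩ ⟨⟨a', c'⟩, ⟨b', d'⟩⟩ h
          simp only [Prod.mk.injEq] at h
          simp_all)
    have hsplit1 : ent p (fun ω => ((X ω i, (fun j : {j : Fin n // j < i} => X ω j.1)),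
           (Y ω i, (fun j : {j : Fin n // i < j} => Y ω j.1))))
        = ent p (fun ω => (X ω i, (fun j : {j : Fin n // j < i} => X ω j.1)))
          + ent p (fun ω => (Y ω i, (fun j : {j : Fin n // i < j} => Y ω j.1))) :=
      ent_pair_comp p hp1 X Y hind
        (fun x => (x i, fun j : {j : Fin n // j < i} => x j.1))
        (fun y => (y i, fun j : {j : Fin n // i < j} => y j.1))
    have hX1 : ent p (fun ω => (X ω i, (fun j : {j : Fin n // j < i} => X ω j.1)))
        = F ((i : ℕ) + 1) := by
      rw [hFdef]
      refine (ent_comp_inj p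
        (f := fun ω => (fun j : {j : Fin n // (j : ℕ) < (i : ℕ) + 1} => X ω j.1))
        (g := fun a => (a ⟨i, Nat.lt_succ_self _⟩,
          fun j : {j : Fin n // j < i} => a ⟨j.1, Nat.lt_succ_of_lt j.2⟩))
        ?_)
      intro a b hab
      have h1 := congrArg Prod.fst hab
      have h2 := congrArg Prod.snd hab
      simp only at h1 h2
      funext j
      rcases Nat.lt_succ_iff_lt_or_eq.mp j.2 with h | h
      · exact congrFun h2 ⟨j.1, h⟩
      · have hj : j = ⟨i, Nat.lt_succ_self _⟩ := Subtype.ext (Fin.ext h)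
        rw [hj]; exact h1
    have hY1 : ent p (fun ω => (Y ω i, (fun j : {j : Fin n // i < j} => Y ω j.1)))
        = G (i : ℕ) := by
      rw [hGdef]
      refine (ent_comp_inj p
        (f := fun ω => (fun j : {j : Fin n // (i : ℕ) ≤ (j : ℕ)} => Y ω j.1))
        (g := fun a => (a ⟨i, le_refl _⟩,
          fun j : {j : Fin n // i < j} => a ⟨j.1, Nat.le_of_lt j.2⟩))
        ?_)
      intro a b hab
      have h1 := congrArg Prod.fst hab
      have h2 := congrArg Prod.snd hab
      simp only at h1 h2
      funext j
      rcases Nat.eq_or_lt_of_le j.2 with h | h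
      · have hj : j = ⟨i, le_refl _⟩ := Subtype.ext (Fin.ext h.symm)
        rw [hj]; exact h1
      · exact congrFun h2 ⟨j.1, h⟩
    -- step (b): conditioning entropy
    have hsplit2 : ent p (fun ω =>
          ((fun j : {j : Fin n // j < i} => X ω j.1),
           (fun j : {j : Fin n // i < j} => Y ω j.1)))
        = ent p (fun ω => (fun j : {j : Fin n // j < i} => X ω j.1))
          + ent p (fun ω => (fun j : {j : Fin n // i < j} => Y ω j.1)) :=
      ent_pair_comp p hp1 X Y hind
        (fun x => (fun j : {j : Fin n // j < i} => x j.1))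
        (fun y => (fun j : {j : Fin n // i < j} => y j.1))
    have hX2 : ent p (fun ω => (fun j : {j : Fin n // j < i} => X ω j.1)) = F (i : ℕ) := by
      rw [hFdef]
      refine (ent_comp_inj p
        (f := fun ω => (fun j : {j : Fin n // (j : ℕ) < (i : ℕ)} => X ω j.1))
        (g := fun a => fun j : {j : Fin n // j < i} => a ⟨j.1, j.2⟩)
        ?_)
      intro a b hab
      funext j
      exact congrFun hab ⟨j.1, j.2⟩
    have hY2 : ent p (fun ω => (fun j : {j : Fin n // i < j} => Y ω j.1))
        = G ((i : ℕ) + 1) := by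
      rw [hGdef]
      refine (ent_comp_inj p
        (f := fun ω => (fun j : {j : Fin n // (i : ℕ) + 1 ≤ (j : ℕ)} => Y ω j.1))
        (g := fun a => fun j : {j : Fin n // i < j} => a ⟨j.1, j.2⟩)
        ?_)
      intro a b hab
      funext j
      exact congrFun hab ⟨j.1, j.2⟩
    unfold condEnt
    rw [hswap, hsplit1, hX1, hY1, hsplit2, hX2, hY2]
    ring
  have hsum : (∑ i : Fin n,
      condEnt p (fun ω => (X ω i, Y ω i))
        (fun ω => ((fun j : {j : Fin n // j < i} => X ω j.1),
                   (fun j : {j : Fin n // i < j} => Y ω j.1))))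
      = (F n - F 0) + (G 0 - G n) := by
    rw [Finset.sum_congr rfl (fun i _ => hterm i), Finset.sum_add_distrib]
    congr 1
    · rw [Fin.sum_univ_eq_sum_range (fun k => F (k + 1) - F k), Finset.sum_range_sub]
    · rw [Fin.sum_univ_eq_sum_range (fun k => G k - G (k + 1)), Finset.sum_range_sub']
  have hF0 : F 0 = 0 := by
    rw [hFdef]
    have he : IsEmpty {j : Fin n // (j : ℕ) < 0} := ⟨by rintro ⟨j, h⟩; omega⟩
    exact ent_subsingleton p hp1 _
  have hGn : G n = 0 := by
    rw [hGdef]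
    have he : IsEmpty {j : Fin n // n ≤ (j : ℕ)} := ⟨by rintro ⟨j, h⟩; omega⟩
    exact ent_subsingleton p hp1 _
  have hFn : F n = ent p X := by
    rw [hFdef]
    exact ent_comp_inj p X
      (g := fun x => fun j : {j : Fin n // (j : ℕ) < n} => x j.1)
      (by intro a b hab; funext j; exact congrFun hab ⟨j, j.isLt⟩)
  have hG0 : G 0 = ent p Y := by
    rw [hGdef]
    exact ent_comp_inj p Y
      (g := fun y => fun j : {j : Fin n // 0 ≤ (j : ℕ)} => y j.1)
      (by intro a b hab; funext j; exact congrFun hab ⟨j, Nat.zero_le _⟩)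
  rw [hsum, hF0, hGn, hFn, hG0]
  have := ent_pair_comp p hp1 X Y hind id id
  simpa using this
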